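/- arXiv:1803.06547 — 2 statements merged into one kernel-verified Lean document; each statement's English description precedes it below -/
import Mathlib

section
/- Let n, p, r, h, r0, r1, h0, h1, h2, s1, d0, d1, d2, hh be integers with p > 0, r1 ≥ 0, n > 0, 4 * (n * n) = p + 5, r = r1 * n + r0, h = h2 * (n * n) + h1 * n + h0, s1 = r1 + r1 / 4, r1 % 4 = 0, d0 = h0 * r0 + h1 * s1, d1 = h0 * r1 + h1 * r0 + h2 * s1, d2 = h2 * r0, and hh = d2 * (n * n) + d1 * n + d0. Then (h * r) mod p = hh mod p. -/
theorem poly_multiply (n p r h r0 r1 h0 h1 h2 s1 d0 d1 d2 hh : ℤ)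
    (hp : p > 0) (hr1 : r1 ≥ 0) (hn : n > 0)
    (h4 : 4 * (n * n) = p + 5)
    (hr : r = r1 * n + r0)
    (hh' : h = h2 * (n * n) + h1 * n + h0)
    (hs1 : s1 = r1 + r1 / 4)
    (hr14 : r1 % 4 = 0)
    (hd0 : d0 = h0 * r0 + h1 * s1)
    (hd1 : d1 = h0 * r1 + h1 * r0 + h2 * s1)
    (hd2 : d2 = h2 * r0)
    (hhh : hh = d2 * (n * n) + d1 * n + d0) :
    (h * r) % p = hh % p := by
  have hk : r1 = 4 * (r1 / 4) := by omega
  have key : h * r - hh = (h2 * n + h1) * (r1 / 4) * p := by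
    subst hd0 hd1 hd2 hhh hs1 hr hh'
    linear_combination (h2 * n * n * n + h1 * n * n - h2 * n - h1) * hk +
      (h2 * n + h1) * (r1 / 4) * h4
  exact (Int.modEq_iff_dvd.mpr ⟨-((h2 * n + h1) * (r1 / 4)), by linarith⟩ :
    Int.ModEq p (h * r) hh)
end

section
/- Define parser t = (list byte) → option (t × ℕ) and say s : t → list byte is a serializer for p : parser t if for all x, p (s x) = some (x, length (s x)). If s1 is a serializer for p1 : parser t1 and s2 is a serializer for p2 : parser t2, then the pair serializer (fun (x, y) => s1 x ++ s2 y) is a serializer for the pair parser that first runs p1, consumes the indicated number of bytes, then runs p2 on the remainder (provided p1 consumes exactly the bytes it reports, i.e., p1 only reads a prefix of its input of the reported length: for all input b and all suffixes b', if p1 b = some (x, n) with n ≤ length b then p1 (take n b ++ b') = some (x, n)). -/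
abbrev Byte := UInt8

def Parser (t : Type*) := List Byte → Option (t × ℕ)

def IsSerializer {t : Type*} (p : Parser t) (s : t → List Byte) : Prop :=
  ∀ x, p (s x) = some (x, (s x).length)

def pPair {t1 t2 : Type*} (p1 : Parser t1) (p2 : Parser t2) : Parser (t1 × t2) :=
  fun b =>
    match p1 b with
    | none => none
    | some (x, n) =>
      match p2 (b.drop n) with
      | none => none
      | some (y, m) => some ((x, y), n + m)

/-- p only reads a prefix of its input of the reported length -/
def PrefixStable {t : Type*} (p : Parser t) : Prop :=
  ∀ (b : List Byte) (b' : List Byte) (x : t) (n : ℕ),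
    p b = some (x, n) → n ≤ b.length → p (b.take n ++ b') = some (x, n)

theorem sPair_isSerializer {t1 t2 : Type*}
    (p1 : Parser t1) (p2 : Parser t2)
    (s1 : t1 → List Byte) (s2 : t2 → List Byte)
    (hs1 : IsSerializer p1 s1) (hs2 : IsSerializer p2 s2)
    (hp1 : PrefixStable p1) :
    IsSerializer (pPair p1 p2) (fun xy => s1 xy.1 ++ s2 xy.2) := by
  rintro ⟨x, y⟩
  have h1 : p1 (s1 x ++ s2 y) = some (x, (s1 x).length) := by
    have := hp1 (s1 x) (s2 y) x (s1 x).length (hs1 x) le_rfl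
    simpa using this
  simp only [pPair, h1, List.drop_left, hs2 y, List.length_append]
end
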